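/- arXiv:1201.1323 — 2 statements merged into one kernel-verified Lean document; each statement's English description precedes it below -/
import Mathlib

section
/- Fix an integer k ≥ 1. Then R_n^{(=k,0,0,0)}(x) = n! for all n ≤ k, and for every s ≥ 1, R_{k+s}^{(=k,0,0,0)}(x) = k! · Π_{i=1}^{s} (k + i − 1 + x). -/
/-- Number of points in quadrant I relative to `(i, σ i)`:
indices `j > i` with `σ j > σ i`. -/
def quad1 {n : ℕ} (σ : Equiv.Perm (Fin n)) (i : Fin n) : ℕ :=
  (Finset.univ.filter (fun j => i < j ∧ σ i < σ j)).card

/-- `mmp^{(=k,0,0,0)}(σ)`: the number of indices `i` such that quadrant I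
relative to `(i, σ i)` contains exactly `k` points. -/
def mmpEqK {n : ℕ} (k : ℕ) (σ : Equiv.Perm (Fin n)) : ℕ :=
  (Finset.univ.filter (fun i => quad1 σ i = k)).card

/-- `R_n^{(=k,0,0,0)}(x) = Σ_{σ ∈ S_n} x^{mmp^{(=k,0,0,0)}(σ)}`. -/
noncomputable def R (k n : ℕ) : Polynomial ℤ :=
  ∑ σ : Equiv.Perm (Fin n), Polynomial.X ^ mmpEqK k σ

open Finset Polynomial

/-- Insertion of a first value `p`, shifting the rest according to `e`. -/
def insPerm {n : ℕ} (p : Fin (n + 1)) (e : Equiv.Perm (Fin n)) :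
    Equiv.Perm (Fin (n + 1)) :=
  (finSuccEquiv n).trans ((Equiv.optionCongr e).trans (finSuccEquiv' p).symm)

lemma insPerm_zero {n : ℕ} (p : Fin (n + 1)) (e : Equiv.Perm (Fin n)) :
    insPerm p e 0 = p := by
  simp [insPerm]

lemma insPerm_succ {n : ℕ} (p : Fin (n + 1)) (e : Equiv.Perm (Fin n)) (i : Fin n) :
    insPerm p e i.succ = p.succAbove (e i) := by
  simp [insPerm]

lemma insPerm_bijective {n : ℕ} :
    Function.Bijective (fun pe : Fin (n + 1) × Equiv.Perm (Fin n) =>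
      insPerm pe.1 pe.2) := by
  rw [Fintype.bijective_iff_injective_and_card]
  constructor
  · rintro ⟨p, e⟩ ⟨p', e'⟩ h
    simp only at h
    have hp : p = p' := by
      rw [← insPerm_zero p e, ← insPerm_zero p' e', h]
    have he : e = e' := by
      ext i
      have := congrArg (fun σ : Equiv.Perm (Fin (n + 1)) => σ i.succ) h
      simp only [insPerm_succ, hp] at this
      exact congrArg Fin.val (Fin.succAbove_right_injective this)
    rw [hp, he]
  · simp [Fintype.card_perm, Nat.factorial_succ, mul_comm]

lemma quad1_insPerm_succ {n : ℕ} (p : Fin (n + 1)) (e : Equiv.Perm (Fin n))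
    (i : Fin n) : quad1 (insPerm p e) i.succ = quad1 e i := by
  unfold quad1
  rw [Finset.card_filter, Finset.card_filter, Fin.sum_univ_succ]
  simp only [insPerm_succ]
  rw [if_neg (fun h => Fin.not_lt_zero _ h.1)]
  rw [zero_add]
  refine Finset.sum_congr rfl fun m _ => ?_
  congr 1
  simp [Fin.succ_lt_succ_iff, Fin.succAbove_lt_succAbove_iff]

lemma quad1_insPerm_zero {n : ℕ} (p : Fin (n + 1)) (e : Equiv.Perm (Fin n)) :
    quad1 (insPerm p e) 0 = n - p.val := by
  unfold quad1
  rw [Finset.card_filter, Fin.sum_univ_succ]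
  rw [if_neg (by simp)]
  rw [zero_add]
  have h1 : ∀ m : Fin n, ((0 : Fin (n+1)) < m.succ ∧
      insPerm p e 0 < insPerm p e m.succ) ↔ p.val ≤ (e m).val := by
    intro m
    rw [insPerm_zero, insPerm_succ]
    constructor
    · rintro ⟨-, h⟩
      have := (Fin.lt_succAbove_iff_le_castSucc p (e m)).mp h
      simpa [Fin.le_iff_val_le_val] using this
    · intro h
      refine ⟨Fin.succ_pos m, (Fin.lt_succAbove_iff_le_castSucc p (e m)).mpr ?_⟩
      simpa [Fin.le_iff_val_le_val] using h
  calc (∑ m : Fin n, if (0 : Fin (n+1)) < m.succ ∧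
          insPerm p e 0 < insPerm p e m.succ then 1 else 0)
      = ∑ m : Fin n, if p.val ≤ (e m).val then 1 else 0 := by
        refine Finset.sum_congr rfl fun m _ => ?_
        congr 1
        simp only [eq_iff_iff]
        exact h1 m
    _ = ∑ v : Fin n, if p.val ≤ v.val then 1 else 0 :=
        Equiv.sum_comp e (fun v : Fin n => if p.val ≤ v.val then (1:ℕ) else 0)
    _ = (Finset.univ.filter (fun v : Fin n => p.val ≤ v.val)).card := by
        rw [Finset.card_filter]
    _ = n - p.val := by
        rw [← Nat.card_Ico p.val n]
        apply Finset.card_bij (fun v _ => v.val)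
        · intro v hv
          simp only [Finset.mem_filter, Finset.mem_univ, true_and] at hv
          simp [Finset.mem_Ico, hv, v.isLt]
        · intro a ha b hb h
          exact Fin.val_injective h
        · intro x hx
          simp only [Finset.mem_Ico] at hx
          exact ⟨⟨x, hx.2⟩, by simp [hx.1], rfl⟩

lemma mmpEqK_insPerm {n : ℕ} (k : ℕ) (p : Fin (n + 1)) (e : Equiv.Perm (Fin n)) :
    mmpEqK k (insPerm p e) = (if n - p.val = k then 1 else 0) + mmpEqK k e := by
  unfold mmpEqK
  rw [Finset.card_filter, Fin.sum_univ_succ, quad1_insPerm_zero,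
    Finset.card_filter]
  congr 1
  refine Finset.sum_congr rfl fun m _ => ?_
  rw [quad1_insPerm_succ]

lemma R_zero (k : ℕ) : R k 0 = 1 := by
  rw [R]
  rw [Fintype.sum_eq_single (1 : Equiv.Perm (Fin 0))
    (fun σ h => absurd (Subsingleton.elim σ 1) h)]
  simp [mmpEqK]

lemma R_succ (k n : ℕ) :
    R k (n + 1) = (∑ p : Fin (n + 1), X ^ (if n - p.val = k then 1 else 0)) * R k n := by
  rw [R, ← Fintype.sum_bijective _ insPerm_bijective _
    (fun σ => X ^ mmpEqK k σ) (fun _ => rfl)]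
  rw [Fintype.sum_prod_type, Finset.sum_mul]
  refine Finset.sum_congr rfl fun p _ => ?_
  rw [R, Finset.mul_sum]
  refine Finset.sum_congr rfl fun e _ => ?_
  simp only [mmpEqK_insPerm, pow_add]

lemma psum_of_le {n k : ℕ} (hk : k ≤ n) :
    (∑ p : Fin (n + 1), X ^ (if n - p.val = k then 1 else 0))
      = ((n : ℤ) : Polynomial ℤ) + X := by
  have key : ∀ p : Fin (n + 1), n - p.val = k ↔ p = ⟨n - k, by omega⟩ := by
    intro p
    rw [Fin.ext_iff]
    have := p.isLt
    simp only
    omega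
  calc (∑ p : Fin (n + 1), X ^ (if n - p.val = k then 1 else 0))
      = ∑ p : Fin (n + 1), ((if p = (⟨n - k, by omega⟩ : Fin (n+1)) then X - 1 else 0) + 1) := by
        refine Finset.sum_congr rfl fun p _ => ?_
        by_cases h : p = (⟨n - k, by omega⟩ : Fin (n+1))
        · rw [if_pos ((key p).mpr h), if_pos h]; ring
        · rw [if_neg (fun hc => h ((key p).mp hc)), if_neg h]; ring
    _ = ((n : ℤ) : Polynomial ℤ) + X := by
        rw [Finset.sum_add_distrib, Finset.sum_ite_eq' Finset.univ _ (fun _ => X - 1)]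
        simp
        ring

lemma psum_of_gt {n k : ℕ} (hk : n < k) :
    (∑ p : Fin (n + 1), X ^ (if n - p.val = k then 1 else 0))
      = (((n : ℤ) + 1 : ℤ) : Polynomial ℤ) := by
  have : ∀ p : Fin (n + 1), ¬ (n - p.val = k) := fun p => by omega
  simp only [this, if_false, pow_zero]
  rw [Finset.sum_const, Finset.card_univ, Fintype.card_fin, nsmul_eq_mul, mul_one]
  push_cast
  ring

lemma R_of_le (k n : ℕ) (h : n ≤ k) : R k n = (Nat.factorial n : Polynomial ℤ) := by
  induction n with
  | zero => simpa using R_zero k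
  | succ m ih =>
    rw [R_succ, psum_of_gt (by omega), ih (by omega), Nat.factorial_succ]
    push_cast
    ring

theorem stmt_2 (k : ℕ) (hk : 1 ≤ k) :
    (∀ n, n ≤ k → R k n = (Nat.factorial n : Polynomial ℤ)) ∧
    (∀ s, 1 ≤ s → R k (k + s) =
      (Nat.factorial k : Polynomial ℤ) *
        ∏ i ∈ Finset.Icc 1 s,
          (((k + i - 1 : ℕ) : Polynomial ℤ) + Polynomial.X)) := by
  refine ⟨fun n hn => R_of_le k n hn, ?_⟩
  intro s hs
  induction s with
  | zero => omega
  | succ m ih =>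
    by_cases hm : m = 0
    · subst hm
      rw [show k + (0 + 1) = k + 1 from rfl, R_succ k k, psum_of_le (le_refl k),
        R_of_le k k le_rfl, show (0:ℕ) + 1 = 1 from rfl, Finset.Icc_self,
        Finset.prod_singleton]
      push_cast [Nat.add_sub_cancel]
      ring
    · have hm1 : 1 ≤ m := by omega
      rw [show k + (m + 1) = (k + m) + 1 from rfl]
      rw [R_succ, psum_of_le (by omega), ih hm1]
      rw [Finset.prod_Icc_succ_top (by omega : 1 ≤ m + 1)]
      push_cast [show k + (m + 1) - 1 = k + m by omega]
      ring
end

section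
/- For every n ≥ 2, B_n^{(1,0,1,1)}(x) = Π_{i=0}^{n−3} (3 + i·x) (an empty product for n = 2); in particular, the number of permutations σ ∈ S_n with 1 appearing to the left of n such that mmp^{(1,0,1,1)}(σ) = 0 equals 3^{n−2}. -/
/-- Number of points in quadrant III relative to `(i, σ i)`. -/
def quad3 {n : ℕ} (σ : Equiv.Perm (Fin n)) (i : Fin n) : ℕ :=
  (Finset.univ.filter (fun j => j < i ∧ σ j < σ i)).card

/-- Number of points in quadrant IV relative to `(i, σ i)`. -/
def quad4 {n : ℕ} (σ : Equiv.Perm (Fin n)) (i : Fin n) : ℕ :=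
  (Finset.univ.filter (fun j => i < j ∧ σ j < σ i)).card

/-- `mmp^{(1,0,1,1)}(σ)`: the number of indices `i` with at least 1 point in
each of quadrants I, III and IV relative to `(i, σ i)`. -/
def mmp1011 {n : ℕ} (σ : Equiv.Perm (Fin n)) : ℕ :=
  (Finset.univ.filter (fun i =>
    1 ≤ quad1 σ i ∧ 1 ≤ quad3 σ i ∧ 1 ≤ quad4 σ i)).card


open Finset Equiv Polynomial

/-- number of positions having a larger value later (non-RL-maxima). -/
def fstat {k : ℕ} (π : Equiv.Perm (Fin k)) : ℕ :=
  (Finset.univ.filter (fun i => ∃ j, i < j ∧ π i < π j)).card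

/-- number of positions having a smaller value earlier (non-LR-minima). -/
def f2stat {k : ℕ} (π : Equiv.Perm (Fin k)) : ℕ :=
  (Finset.univ.filter (fun i => ∃ j, j < i ∧ π j < π i)).card

/-- number of positions having both a larger and a smaller value later. -/
def gstat {k : ℕ} (π : Equiv.Perm (Fin k)) : ℕ :=
  (Finset.univ.filter (fun i => (∃ j, i < j ∧ π i < π j) ∧ (∃ j, i < j ∧ π j < π i))).card

/-- delete the first position of a permutation, standardizing values. -/
def delZero {m : ℕ} (σ : Equiv.Perm (Fin (m+1))) : Equiv.Perm (Fin m) :=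
  (finSuccAboveEquiv (0 : Fin (m+1))).trans
    ((σ.subtypeEquiv (fun a => not_congr
      ⟨fun h => by rw [h], fun h => σ.injective h⟩)).trans
      (finSuccAboveEquiv (σ 0)).symm)

lemma succAbove_symm {m : ℕ} (p : Fin (m+1)) (x : {y : Fin (m+1) // y ≠ p}) :
    p.succAbove ((finSuccAboveEquiv p).symm x) = x.val :=
  congrArg Subtype.val ((finSuccAboveEquiv_apply p _).symm.trans (Equiv.apply_symm_apply _ x))

lemma delZero_spec {m : ℕ} (σ : Equiv.Perm (Fin (m+1))) (j : Fin m) :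
    σ j.succ = (σ 0).succAbove (delZero σ j) := by
  unfold delZero
  rw [Equiv.trans_apply, Equiv.trans_apply, succAbove_symm]
  have : ((finSuccAboveEquiv (0:Fin (m+1))) j : Fin (m+1)) = j.succ := by
    rw [finSuccAboveEquiv_apply]
    exact Fin.zero_succAbove j
  rw [Equiv.subtypeEquiv_apply]
  show σ j.succ = σ ((finSuccAboveEquiv (0:Fin (m+1))) j : Fin (m+1))
  exact (congrArg σ this).symm

lemma delZero_lt_iff {m : ℕ} (σ : Equiv.Perm (Fin (m+1))) (j j' : Fin m) :
    σ j.succ < σ j'.succ ↔ delZero σ j < delZero σ j' := by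
  rw [delZero_spec σ j, delZero_spec σ j', Fin.succAbove_lt_succAbove_iff]

lemma phi_bijective (m : ℕ) :
    Function.Bijective (fun σ : Equiv.Perm (Fin (m+1)) => (σ 0, delZero σ)) := by
  rw [Fintype.bijective_iff_injective_and_card]
  constructor
  · intro σ σ' h
    have h0 : σ 0 = σ' 0 := congrArg Prod.fst h
    have h1 : delZero σ = delZero σ' := congrArg Prod.snd h
    ext i
    induction i using Fin.cases with
    | zero => exact congrArg Fin.val h0
    | succ j => rw [delZero_spec σ j, delZero_spec σ' j, h0, h1]
  · simp [Fintype.card_perm, Nat.factorial_succ]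

lemma exists_gt_zero_iff {m : ℕ} (σ : Equiv.Perm (Fin (m+1))) :
    (∃ j, (0:Fin (m+1)) < j ∧ σ 0 < σ j) ↔ σ 0 ≠ Fin.last m := by
  constructor
  · rintro ⟨j, _, hlt⟩
    exact (lt_of_lt_of_le hlt (Fin.le_last _)).ne
  · intro h
    refine ⟨σ.symm (Fin.last m), ?_, ?_⟩
    · rw [Fin.pos_iff_ne_zero]
      intro hz
      exact h (by rw [← hz, Equiv.apply_symm_apply])
    · rw [Equiv.apply_symm_apply]
      exact lt_of_le_of_ne (Fin.le_last _) h
  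
lemma exists_lt_zero_iff {m : ℕ} (σ : Equiv.Perm (Fin (m+1))) :
    (∃ j, (0:Fin (m+1)) < j ∧ σ j < σ 0) ↔ σ 0 ≠ 0 := by
  constructor
  · rintro ⟨j, _, hlt⟩
    rw [Fin.pos_iff_ne_zero] at *
    intro h
    rw [h] at hlt
    exact absurd hlt (by simp)
  · intro h
    refine ⟨σ.symm 0, ?_, ?_⟩
    · rw [Fin.pos_iff_ne_zero]
      intro hz
      exact h ((Equiv.apply_symm_apply σ 0).symm.trans (congrArg σ hz)).symm
    · rw [Equiv.apply_symm_apply, Fin.pos_iff_ne_zero]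
      exact h

lemma exists_succ_gt_iff {m : ℕ} (σ : Equiv.Perm (Fin (m+1))) (j : Fin m) :
    (∃ k, j.succ < k ∧ σ j.succ < σ k) ↔ (∃ k, j < k ∧ delZero σ j < delZero σ k) := by
  constructor
  · rintro ⟨k, hk, hlt⟩
    obtain ⟨k', rfl⟩ := Fin.eq_succ_of_ne_zero
      ((Fin.pos_iff_ne_zero).mp (lt_trans (Fin.succ_pos j) hk))
    exact ⟨k', Fin.succ_lt_succ_iff.mp hk, (delZero_lt_iff σ j k').mp hlt⟩
  · rintro ⟨k', hk, hlt⟩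
    exact ⟨k'.succ, Fin.succ_lt_succ_iff.mpr hk, (delZero_lt_iff σ j k').mpr hlt⟩

lemma exists_succ_lt_iff {m : ℕ} (σ : Equiv.Perm (Fin (m+1))) (j : Fin m) :
    (∃ k, j.succ < k ∧ σ k < σ j.succ) ↔ (∃ k, j < k ∧ delZero σ k < delZero σ j) := by
  constructor
  · rintro ⟨k, hk, hlt⟩
    obtain ⟨k', rfl⟩ := Fin.eq_succ_of_ne_zero
      ((Fin.pos_iff_ne_zero).mp (lt_trans (Fin.succ_pos j) hk))
    exact ⟨k', Fin.succ_lt_succ_iff.mp hk, (delZero_lt_iff σ k' j).mp hlt⟩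
  · rintro ⟨k', hk, hlt⟩
    exact ⟨k'.succ, Fin.succ_lt_succ_iff.mpr hk, (delZero_lt_iff σ k' j).mpr hlt⟩

lemma fstat_rec {m : ℕ} (σ : Equiv.Perm (Fin (m+1))) :
    fstat σ = (if σ 0 ≠ Fin.last m then 1 else 0) + fstat (delZero σ) := by
  unfold fstat
  rw [Finset.card_filter, Fin.sum_univ_succ, Finset.card_filter]
  congr 1
  · congr 1
    simp only [eq_iff_iff]
    exact exists_gt_zero_iff σ
  · apply Finset.sum_congr rfl
    intro j _
    congr 1
    simp only [eq_iff_iff]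
    exact exists_succ_gt_iff σ j

lemma gstat_rec {m : ℕ} (σ : Equiv.Perm (Fin (m+1))) :
    gstat σ = (if σ 0 ≠ Fin.last m ∧ σ 0 ≠ 0 then 1 else 0) + gstat (delZero σ) := by
  unfold gstat
  rw [Finset.card_filter, Fin.sum_univ_succ, Finset.card_filter]
  congr 1
  · congr 1
    simp only [eq_iff_iff]
    exact and_congr (exists_gt_zero_iff σ) (exists_lt_zero_iff σ)
  · apply Finset.sum_congr rfl
    intro j _
    congr 1
    simp only [eq_iff_iff]
    exact and_congr (exists_succ_gt_iff σ j) (exists_succ_lt_iff σ j)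

noncomputable def Ppoly (k : ℕ) : Polynomial ℤ :=
  ∏ i ∈ Finset.range k, ((1 : Polynomial ℤ) + (i : Polynomial ℤ) * Polynomial.X)

noncomputable def Qpoly (k : ℕ) : Polynomial ℤ :=
  ∏ i ∈ Finset.range k, ((2 : Polynomial ℤ) + (i : Polynomial ℤ) * Polynomial.X)

lemma sum_ite_cost {m : ℕ} {p : Fin m → Prop} [DecidablePred p] (c d : ℕ)
    (hc : (Finset.univ.filter p).card = c)
    (hd : (Finset.univ.filter (fun a => ¬ p a)).card = d) :
    (∑ a : Fin m, (Polynomial.X : Polynomial ℤ) ^ (if p a then 1 else 0)) =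
      (c : Polynomial ℤ) * Polynomial.X + (d : Polynomial ℤ) := by
  have h1 : ∀ a : Fin m, (Polynomial.X : Polynomial ℤ) ^ (if p a then 1 else 0) =
      (if p a then Polynomial.X else 1) := fun a => by split <;> simp
  rw [Finset.sum_congr rfl (fun a _ => h1 a), Finset.sum_ite, Finset.sum_const,
    Finset.sum_const, hc, hd, nsmul_eq_mul, nsmul_eq_mul, mul_one]

lemma Fsum : ∀ k : ℕ, (∑ π : Equiv.Perm (Fin k), (Polynomial.X : Polynomial ℤ) ^ fstat π) = Ppoly k := by
  intro k
  induction k with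
  | zero =>
    rw [show (Ppoly 0) = 1 from Finset.prod_range_zero _]
    have h0 : ∀ π : Equiv.Perm (Fin 0), fstat π = 0 := by
      intro π; unfold fstat; simp
    rw [Finset.sum_congr rfl (fun π _ => by rw [h0 π, pow_zero])]
    rw [Finset.sum_const, Finset.card_univ, Fintype.card_perm]
    simp
  | succ m ih =>
    rw [Fintype.sum_bijective _ (phi_bijective m)
      (fun σ => (Polynomial.X : Polynomial ℤ) ^ fstat σ)
      (fun p => (Polynomial.X : Polynomial ℤ) ^ ((if p.1 ≠ Fin.last m then 1 else 0) + fstat p.2))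
      (fun σ => congrArg (fun t => (Polynomial.X : Polynomial ℤ) ^ t) (fstat_rec σ))]
    rw [Fintype.sum_prod_type]
    have h2 : ∀ a : Fin (m+1),
        (∑ τ : Equiv.Perm (Fin m), (Polynomial.X : Polynomial ℤ) ^
          ((if a ≠ Fin.last m then 1 else 0) + fstat τ)) =
        (Polynomial.X : Polynomial ℤ) ^ (if a ≠ Fin.last m then 1 else 0) * Ppoly m := by
      intro a
      rw [← ih, Finset.mul_sum]
      exact Finset.sum_congr rfl (fun τ _ => pow_add _ _ _)
    rw [Finset.sum_congr rfl (fun a _ => h2 a), ← Finset.sum_mul]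
    have hc : (Finset.univ.filter (fun a : Fin (m+1) => a ≠ Fin.last m)).card = m := by
      rw [Finset.filter_ne', Finset.card_erase_of_mem (Finset.mem_univ _)]
      simp
    have hd : (Finset.univ.filter (fun a : Fin (m+1) => ¬ a ≠ Fin.last m)).card = 1 := by
      have he : (Finset.univ.filter (fun a : Fin (m+1) => ¬ a ≠ Fin.last m)) = {Fin.last m} := by
        ext a
        simp [not_not]
      rw [he, Finset.card_singleton]
    rw [sum_ite_cost m 1 hc hd]
    unfold Ppoly
    rw [Finset.prod_range_succ]
    push_cast
    ring

lemma revconj_bijective (k : ℕ) :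
    Function.Bijective (fun π : Equiv.Perm (Fin k) =>
      (Fin.revPerm.trans (π.trans Fin.revPerm) : Equiv.Perm (Fin k))) := by
  rw [Fintype.bijective_iff_injective_and_card]
  refine ⟨?_, rfl⟩
  intro π π' h
  ext x
  have h2 := congrArg (fun e : Equiv.Perm (Fin k) => (e (Fin.rev x)).rev) h
  simp only [Equiv.trans_apply, Fin.revPerm_apply, Fin.rev_rev] at h2
  exact congrArg Fin.val h2

lemma f2stat_revconj {k : ℕ} (π : Equiv.Perm (Fin k)) :
    f2stat (Fin.revPerm.trans (π.trans Fin.revPerm)) = fstat π := by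
  unfold f2stat fstat
  apply Finset.card_bij (fun i _ => Fin.rev i)
  · intro i hi
    simp only [Finset.mem_filter, Finset.mem_univ, true_and,
      Equiv.trans_apply, Fin.revPerm_apply] at hi ⊢
    obtain ⟨j, hj, hlt⟩ := hi
    exact ⟨Fin.rev j, Fin.rev_lt_rev.mpr hj, Fin.rev_lt_rev.mp hlt⟩
  · intro a _ b _ h
    exact Fin.rev_injective h
  · intro b hb
    refine ⟨Fin.rev b, ?_, Fin.rev_rev b⟩
    simp only [Finset.mem_filter, Finset.mem_univ, true_and,
      Equiv.trans_apply, Fin.revPerm_apply, Fin.rev_rev] at hb ⊢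
    obtain ⟨j, hj, hlt⟩ := hb
    exact ⟨Fin.rev j, Fin.rev_lt_rev.mpr hj, by rw [Fin.rev_rev, Fin.rev_lt_rev]; exact hlt⟩

lemma F2sum (k : ℕ) :
    (∑ π : Equiv.Perm (Fin k), (Polynomial.X : Polynomial ℤ) ^ f2stat π) = Ppoly k := by
  rw [← Fsum k]
  exact (Fintype.sum_bijective _ (revconj_bijective k) _ _
    (fun π => (congrArg (fun t => (Polynomial.X : Polynomial ℤ) ^ t) (f2stat_revconj π)).symm)).symm

lemma Gsum : ∀ m : ℕ, (∑ π : Equiv.Perm (Fin (m+1)), (Polynomial.X : Polynomial ℤ) ^ gstat π) = Qpoly m := by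
  intro m
  induction m with
  | zero =>
    rw [show (Qpoly 0) = 1 from Finset.prod_range_zero _]
    have h0 : ∀ π : Equiv.Perm (Fin 1), gstat π = 0 := by
      intro π; unfold gstat
      rw [Finset.card_eq_zero, Finset.filter_eq_empty_iff]
      intro i _
      rintro ⟨⟨j, hj, -⟩, -⟩
      have h1 := Fin.lt_def.mp hj
      have h2 := j.isLt
      omega
    rw [Finset.sum_congr rfl (fun π _ => by rw [h0 π, pow_zero])]
    rw [Finset.sum_const, Finset.card_univ, Fintype.card_perm]
    simp
  | succ m ih =>
    rw [Fintype.sum_bijective _ (phi_bijective (m+1))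
      (fun σ => (Polynomial.X : Polynomial ℤ) ^ gstat σ)
      (fun p => (Polynomial.X : Polynomial ℤ) ^
        ((if p.1 ≠ Fin.last (m+1) ∧ p.1 ≠ 0 then 1 else 0) + gstat p.2))
      (fun σ => congrArg (fun t => (Polynomial.X : Polynomial ℤ) ^ t) (gstat_rec σ))]
    rw [Fintype.sum_prod_type]
    have h2 : ∀ a : Fin (m+2),
        (∑ τ : Equiv.Perm (Fin (m+1)), (Polynomial.X : Polynomial ℤ) ^
          ((if a ≠ Fin.last (m+1) ∧ a ≠ 0 then 1 else 0) + gstat τ)) =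
        (Polynomial.X : Polynomial ℤ) ^ (if a ≠ Fin.last (m+1) ∧ a ≠ 0 then 1 else 0) * Qpoly m := by
      intro a
      rw [← ih, Finset.mul_sum]
      exact Finset.sum_congr rfl (fun τ _ => pow_add _ _ _)
    rw [Finset.sum_congr rfl (fun a _ => h2 a), ← Finset.sum_mul]
    have hc : (Finset.univ.filter (fun a : Fin (m+2) => a ≠ Fin.last (m+1) ∧ a ≠ 0)).card = m := by
      have h1 : (Finset.univ.filter (fun a : Fin (m+2) => a ≠ Fin.last (m+1) ∧ a ≠ 0)) =
          (Finset.univ.erase (Fin.last (m+1))).erase 0 := by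
        ext a
        simp only [Finset.mem_filter, Finset.mem_univ, true_and, Finset.mem_erase]
        tauto
      have hne : (0 : Fin (m+2)) ≠ Fin.last (m+1) := by
        intro h
        have := congrArg Fin.val h
        simp at this
      rw [h1, Finset.card_erase_of_mem, Finset.card_erase_of_mem (Finset.mem_univ _)]
      · simp
      · exact Finset.mem_erase.mpr ⟨hne, Finset.mem_univ _⟩
    have hd : (Finset.univ.filter (fun a : Fin (m+2) => ¬ (a ≠ Fin.last (m+1) ∧ a ≠ 0))).card = 2 := by
      have := Finset.card_filter_add_card_filter_not
        (s := (Finset.univ : Finset (Fin (m+2))))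
        (fun a : Fin (m+2) => a ≠ Fin.last (m+1) ∧ a ≠ 0)
      rw [hc] at this
      simp only [Finset.card_univ, Fintype.card_fin] at this
      omega
    rw [sum_ite_cost m 2 hc hd]
    unfold Qpoly
    rw [Finset.prod_range_succ]
    push_cast
    ring

lemma convolution : ∀ M : ℕ,
    (∑ k ∈ Finset.range (M+1), (M.choose k) • (Ppoly k * Qpoly (M - k))) =
      ∏ i ∈ Finset.range M, ((3 : Polynomial ℤ) + (i : Polynomial ℤ) * Polynomial.X) := by
  intro M
  induction M with
  | zero => simp [Ppoly, Qpoly]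
  | succ M ih =>
    have hsplit : ∀ k, (((M+1).choose (k+1)) • (Ppoly (k+1) * Qpoly (M+1-(k+1)))) =
        (M.choose k) • (Ppoly (k+1) * Qpoly (M-k)) +
        (M.choose (k+1)) • (Ppoly (k+1) * Qpoly (M-k)) := by
      intro k
      rw [Nat.succ_sub_succ, Nat.choose_succ_succ, add_smul]
    have hB' : (∑ k ∈ Finset.range (M+1), (M.choose (k+1)) • (Ppoly (k+1) * Qpoly (M-k))) +
        (((M+1).choose 0) • (Ppoly 0 * Qpoly (M+1-0))) =
        ∑ k ∈ Finset.range (M+1), (M.choose k) • (Ppoly k * Qpoly (M+1-k)) := by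
      have hre : ∀ k, (M.choose (k+1)) • (Ppoly (k+1) * Qpoly (M-k)) =
          (fun j => (M.choose j) • (Ppoly j * Qpoly (M+1-j))) (k+1) := by
        intro k
        simp only [Nat.succ_sub_succ]
      have hz : (((M+1).choose 0) • (Ppoly 0 * Qpoly (M+1-0))) =
          (fun j => (M.choose j) • (Ppoly j * Qpoly (M+1-j))) 0 := by
        simp
      rw [Finset.sum_congr rfl (fun k _ => hre k), hz,
        ← Finset.sum_range_succ' (fun j => (M.choose j) • (Ppoly j * Qpoly (M+1-j))) (M+1),
        Finset.sum_range_succ]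
      simp [Nat.choose_succ_self]
    have key : ∀ k ∈ Finset.range (M+1),
        (M.choose k) • (Ppoly k * Qpoly (M+1-k)) + (M.choose k) • (Ppoly (k+1) * Qpoly (M-k)) =
        ((M.choose k) • (Ppoly k * Qpoly (M-k))) * ((3 : Polynomial ℤ) + (M : Polynomial ℤ) * Polynomial.X) := by
      intro k hk
      have hk' : k ≤ M := Nat.lt_succ_iff.mp (Finset.mem_range.mp hk)
      have h1 : M + 1 - k = (M-k)+1 := by omega
      rw [h1]
      rw [show Qpoly ((M-k)+1) = Qpoly (M-k) * ((2:Polynomial ℤ) + ((M-k : ℕ) : Polynomial ℤ) * Polynomial.X)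
        from Finset.prod_range_succ _ _]
      rw [show Ppoly (k+1) = Ppoly k * ((1:Polynomial ℤ) + ((k : ℕ) : Polynomial ℤ) * Polynomial.X)
        from Finset.prod_range_succ _ _]
      rw [smul_mul_assoc, ← smul_add]
      congr 1
      have hcast : ((M - k : ℕ) : Polynomial ℤ) = (M : Polynomial ℤ) - (k : Polynomial ℤ) := by
        push_cast [hk']
        ring
      rw [hcast]
      ring
    rw [Finset.sum_range_succ' (fun k => ((M+1).choose k) • (Ppoly k * Qpoly (M+1-k))) (M+1)]
    rw [Finset.sum_congr rfl (fun k _ => hsplit k), Finset.sum_add_distrib]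
    rw [add_assoc, hB', add_comm, ← Finset.sum_add_distrib]
    rw [Finset.sum_congr rfl key, ← Finset.sum_mul, ih, Finset.prod_range_succ]

/-! ### The split at the position of the value 0 -/

def middles (m : ℕ) : Finset (Fin (m+2)) := Finset.univ \ {0, Fin.last (m+1)}

lemma mem_middles {m : ℕ} {x : Fin (m+2)} :
    x ∈ middles m ↔ x ≠ 0 ∧ x ≠ Fin.last (m+1) := by
  simp [middles]

lemma card_middles (m : ℕ) : (middles m).card = m := by
  rw [middles, Finset.card_sdiff_of_subset (Finset.subset_univ _)]
  have h2 : ({0, Fin.last (m+1)} : Finset (Fin (m+2))).card = 2 := by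
    rw [Finset.card_insert_of_notMem, Finset.card_singleton]
    simp only [Finset.mem_singleton]
    intro h
    have := congrArg Fin.val h
    simp at this
  rw [h2]
  simp

def Tset {m : ℕ} (S : Finset (Fin (m+2))) : Finset (Fin (m+2)) :=
  Finset.univ \ insert 0 S

lemma mem_Tset {m : ℕ} {S : Finset (Fin (m+2))} {x : Fin (m+2)} :
    x ∈ Tset S ↔ x ≠ 0 ∧ x ∉ S := by
  simp [Tset]

lemma card_Tset {m k : ℕ} {S : Finset (Fin (m+2))} (hS0 : (0 : Fin (m+2)) ∉ S)
    (hSc : S.card = k) (hk : k ≤ m) : (Tset S).card = (m - k) + 1 := by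
  rw [Tset, Finset.card_sdiff_of_subset (Finset.subset_univ _),
    Finset.card_insert_of_notMem hS0, hSc]
  simp only [Finset.card_univ, Fintype.card_fin]
  omega

section SplitCore

variable {m k r : ℕ} {S : Finset (Fin (m+2))}

/-- the decoded permutation, as a function -/
def dfun (hSc : S.card = k) (hTc : (Tset S).card = r+1) (hm : m = k + r)
    (p : Equiv.Perm (Fin k) × Equiv.Perm (Fin (r+1))) (i : Fin (m+2)) : Fin (m+2) :=
  if h : i.val < k then ((S.orderIsoOfFin hSc) (p.1 ⟨i.val, h⟩) : Fin (m+2))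
  else if h2 : i.val = k then 0
  else (((Tset S).orderIsoOfFin hTc) (p.2 ⟨i.val - (k+1), by
    have := i.isLt; omega⟩) : Fin (m+2))

lemma dfun_injective (hSc : S.card = k) (hTc : (Tset S).card = r+1) (hm : m = k + r)
    (hS0 : (0 : Fin (m+2)) ∉ S)
    (p : Equiv.Perm (Fin k) × Equiv.Perm (Fin (r+1))) :
    Function.Injective (dfun hSc hTc hm p) := by
  have hmemS : ∀ j : Fin k, ((S.orderIsoOfFin hSc) j : Fin (m+2)) ∈ S :=
    fun j => (S.orderIsoOfFin hSc j).2
  have hmemT : ∀ j, (((Tset S).orderIsoOfFin hTc) j : Fin (m+2)) ∈ Tset S :=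
    fun j => ((Tset S).orderIsoOfFin hTc j).2
  intro i i' heq
  unfold dfun at heq
  split_ifs at heq with h1 h2 h3 h4 h5 h6 h7 h8
  -- case 1 : i.val < k, i'.val < k
  · have e1 : (S.orderIsoOfFin hSc) (p.1 ⟨i.val, h1⟩) = (S.orderIsoOfFin hSc) (p.1 ⟨i'.val, h2⟩) :=
      Subtype.coe_injective heq
    have e2 := p.1.injective ((S.orderIsoOfFin hSc).injective e1)
    have e3 := congrArg Fin.val e2
    exact Fin.ext e3
  -- case 2 : i.val < k, i'.val = k
  · exact absurd (heq ▸ hmemS (p.1 ⟨i.val, h1⟩)) hS0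
  -- case 3 : i.val < k, i'.val > k
  · have := hmemT (p.2 ⟨i'.val - (k+1), by have := i'.isLt; omega⟩)
    rw [← heq] at this
    exact absurd (hmemS _) (mem_Tset.mp this).2
  -- case 4 : i.val = k, i'.val < k
  · exact absurd (by rw [heq]; exact hmemS (p.1 ⟨i'.val, h5⟩) : (0:Fin (m+2)) ∈ S) hS0
  -- case 5 : i.val = k, i'.val = k
  · exact Fin.ext (h4.trans h6.symm)
  -- case 6 : i.val = k, i'.val > k
  · exact absurd (hmemT (p.2 ⟨i'.val - (k+1), by have := i'.isLt; omega⟩)) (by rw [← heq]; simp [mem_Tset])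
  -- case 7 : i.val > k, i'.val < k
  · have := hmemT (p.2 ⟨i.val - (k+1), by have := i.isLt; omega⟩)
    rw [heq] at this
    exact absurd (hmemS _) (mem_Tset.mp this).2
  -- case 8 : i.val > k, i'.val = k
  · exact absurd (hmemT (p.2 ⟨i.val - (k+1), by have := i.isLt; omega⟩)) (by rw [heq]; simp [mem_Tset])
  -- case 9 : i.val > k, i'.val > k
  · have e1 := Subtype.coe_injective heq
    have e2 := p.2.injective (((Tset S).orderIsoOfFin hTc).injective e1)
    have e3 := congrArg Fin.val e2
    simp only at e3
    exact Fin.ext (by omega)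

/-- the decoded permutation -/
noncomputable def decPerm (hSc : S.card = k) (hTc : (Tset S).card = r+1) (hm : m = k + r)
    (hS0 : (0 : Fin (m+2)) ∉ S)
    (p : Equiv.Perm (Fin k) × Equiv.Perm (Fin (r+1))) : Equiv.Perm (Fin (m+2)) :=
  Equiv.ofBijective (dfun hSc hTc hm p)
    (Finite.injective_iff_bijective.mp (dfun_injective hSc hTc hm hS0 p))

variable (hSc : S.card = k) (hTc : (Tset S).card = r+1) (hm : m = k + r)
  (hS0 : (0 : Fin (m+2)) ∉ S)

lemma decPerm_lt (p) {i : Fin (m+2)} (h : i.val < k) :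
    decPerm hSc hTc hm hS0 p i = ((S.orderIsoOfFin hSc) (p.1 ⟨i.val, h⟩) : Fin (m+2)) := by
  show dfun hSc hTc hm p i = _
  unfold dfun
  rw [dif_pos h]

lemma decPerm_eq (p) {i : Fin (m+2)} (h : i.val = k) :
    decPerm hSc hTc hm hS0 p i = 0 := by
  show dfun hSc hTc hm p i = _
  unfold dfun
  rw [dif_neg (by omega), dif_pos h]

lemma decPerm_gt (p) {i : Fin (m+2)} (h1 : ¬ i.val < k) (h2 : ¬ i.val = k) :
    decPerm hSc hTc hm hS0 p i =
      (((Tset S).orderIsoOfFin hTc) (p.2 ⟨i.val - (k+1), by have := i.isLt; omega⟩) : Fin (m+2)) := by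
  show dfun hSc hTc hm p i = _
  unfold dfun
  rw [dif_neg h1, dif_neg h2]

end SplitCore

lemma exists_card_pos {n : ℕ} (p : Fin n → Prop) [DecidablePred p] :
    1 ≤ (Finset.univ.filter p).card ↔ ∃ j, p j := by
  rw [show (1 ≤ (Finset.univ.filter p).card) ↔ (0 < (Finset.univ.filter p).card) from Iff.rfl,
    Finset.card_pos, Finset.filter_nonempty_iff]
  simp

lemma mmp1011_eq {n : ℕ} (σ : Equiv.Perm (Fin n)) :
    mmp1011 σ = (Finset.univ.filter (fun i =>
      (∃ j, i < j ∧ σ i < σ j) ∧ (∃ j, j < i ∧ σ j < σ i) ∧ (∃ j, i < j ∧ σ j < σ i))).card := by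
  unfold mmp1011
  congr 1
  apply Finset.filter_congr
  intro i _
  unfold quad1 quad3 quad4
  rw [exists_card_pos, exists_card_pos, exists_card_pos]

section SplitCore2

variable {m k r : ℕ} {S : Finset (Fin (m+2))}
  (hSc : S.card = k) (hTc : (Tset S).card = r+1) (hm : m = k + r)
  (hS0 : (0 : Fin (m+2)) ∉ S) {q : Fin (m+2)}

lemma decPerm_memS (p) {i : Fin (m+2)} (h : i.val < k) :
    decPerm hSc hTc hm hS0 p i ∈ S := by
  rw [decPerm_lt hSc hTc hm hS0 p h]
  exact (S.orderIsoOfFin hSc _).2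

lemma decPerm_memT (p) {i : Fin (m+2)} (h1 : ¬ i.val < k) (h2 : ¬ i.val = k) :
    decPerm hSc hTc hm hS0 p i ∈ Tset S := by
  rw [decPerm_gt hSc hTc hm hS0 p h1 h2]
  exact ((Tset S).orderIsoOfFin hTc _).2

lemma decPerm_symm_zero (hq : q.val = k) (p) : (decPerm hSc hTc hm hS0 p).symm 0 = q := by
  rw [Equiv.symm_apply_eq]
  exact (decPerm_eq hSc hTc hm hS0 p hq).symm

lemma decPerm_lastpos (hSL : Fin.last (m+1) ∉ S) (p) : ∀ i : Fin (m+2),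
    decPerm hSc hTc hm hS0 p i = Fin.last (m+1) → k < i.val := by
  intro i hi
  rcases lt_trichotomy i.val k with h | h | h
  · exfalso
    have := decPerm_memS hSc hTc hm hS0 p h
    rw [hi] at this
    exact hSL this
  · exfalso
    rw [decPerm_eq hSc hTc hm hS0 p h] at hi
    have := congrArg Fin.val hi
    simp at this
  · exact h

lemma decPerm_symm_last (hSL : Fin.last (m+1) ∉ S) (hq : q.val = k) (p) : q < (decPerm hSc hTc hm hS0 p).symm (Fin.last (m+1)) := by
  have h1 := decPerm_lastpos hSc hTc hm hS0 hSL p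
    ((decPerm hSc hTc hm hS0 p).symm (Fin.last (m+1)))
    (Equiv.apply_symm_apply _ _)
  rw [Fin.lt_def, hq]
  exact h1

lemma decPerm_image (hq : q.val = k) (p) :
    (Finset.univ.filter (fun i => i < q)).image (decPerm hSc hTc hm hS0 p) = S := by
  apply Finset.Subset.antisymm
  · intro x hx
    obtain ⟨i, hi, rfl⟩ := Finset.mem_image.mp hx
    have hik : i.val < k := by
      have := Fin.lt_def.mp (Finset.mem_filter.mp hi).2
      omega
    exact decPerm_memS hSc hTc hm hS0 p hik
  · intro x hx
    have hkm : k < m + 2 := by omega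
    set j' := p.1.symm ((S.orderIsoOfFin hSc).symm ⟨x, hx⟩) with hj'
    refine Finset.mem_image.mpr ⟨⟨j'.val, by have := j'.isLt; omega⟩, ?_, ?_⟩
    · refine Finset.mem_filter.mpr ⟨Finset.mem_univ _, ?_⟩
      have hj'k := j'.isLt
      exact Fin.lt_def.mpr (show j'.val < q.val by omega)
    · rw [decPerm_lt hSc hTc hm hS0 p (show (⟨j'.val, _⟩ : Fin (m+2)).val < k from j'.isLt)]
      show ((S.orderIsoOfFin hSc) (p.1 ⟨j'.val, j'.isLt⟩) : Fin (m+2)) = x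
      have e1 : (⟨j'.val, j'.isLt⟩ : Fin k) = j' := rfl
      rw [e1, hj', Equiv.apply_symm_apply, OrderIso.apply_symm_apply]

lemma decPerm_lt_iffS (p) {a b : Fin (m+2)} (ha : a.val < k) (hb : b.val < k) :
    decPerm hSc hTc hm hS0 p a < decPerm hSc hTc hm hS0 p b ↔
      p.1 ⟨a.val, ha⟩ < p.1 ⟨b.val, hb⟩ := by
  rw [decPerm_lt hSc hTc hm hS0 p ha, decPerm_lt hSc hTc hm hS0 p hb,
    Subtype.coe_lt_coe, OrderIso.lt_iff_lt]

lemma decPerm_lt_iffS' (p) (a b : Fin (m+2)) (x y : Fin k)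
    (hax : a.val = x.val) (hby : b.val = y.val) :
    decPerm hSc hTc hm hS0 p a < decPerm hSc hTc hm hS0 p b ↔ p.1 x < p.1 y := by
  have ha : a.val < k := by have := x.isLt; omega
  have hb : b.val < k := by have := y.isLt; omega
  rw [decPerm_lt_iffS hSc hTc hm hS0 p ha hb]
  have e1 : (⟨a.val, ha⟩ : Fin k) = x := Fin.ext hax
  have e2 : (⟨b.val, hb⟩ : Fin k) = y := Fin.ext hby
  rw [e1, e2]

lemma decPerm_lt_iffT (p) {a b : Fin (m+2)} (ha1 : ¬ a.val < k) (ha2 : ¬ a.val = k)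
    (hb1 : ¬ b.val < k) (hb2 : ¬ b.val = k) :
    decPerm hSc hTc hm hS0 p a < decPerm hSc hTc hm hS0 p b ↔
      p.2 ⟨a.val - (k+1), by have := a.isLt; omega⟩ <
      p.2 ⟨b.val - (k+1), by have := b.isLt; omega⟩ := by
  rw [decPerm_gt hSc hTc hm hS0 p ha1 ha2, decPerm_gt hSc hTc hm hS0 p hb1 hb2,
    Subtype.coe_lt_coe, OrderIso.lt_iff_lt]

lemma decPerm_lt_iffT' (p) (a b : Fin (m+2)) (x y : Fin (r+1))
    (hax : a.val = x.val + (k+1)) (hby : b.val = y.val + (k+1)) :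
    decPerm hSc hTc hm hS0 p a < decPerm hSc hTc hm hS0 p b ↔ p.2 x < p.2 y := by
  have ha1 : ¬ a.val < k := by omega
  have ha2 : ¬ a.val = k := by omega
  have hb1 : ¬ b.val < k := by omega
  have hb2 : ¬ b.val = k := by omega
  rw [decPerm_lt_iffT hSc hTc hm hS0 p ha1 ha2 hb1 hb2]
  have e1 : (⟨a.val - (k+1), by have := a.isLt; omega⟩ : Fin (r+1)) = x :=
    Fin.ext (show a.val - (k+1) = x.val by omega)
  have e2 : (⟨b.val - (k+1), by have := b.isLt; omega⟩ : Fin (r+1)) = y :=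
    Fin.ext (show b.val - (k+1) = y.val by omega)
  rw [e1, e2]

lemma mmp_decPerm (hSL : Fin.last (m+1) ∉ S) (hq : q.val = k) (p) :
    mmp1011 (decPerm hSc hTc hm hS0 p) = f2stat p.1 + gstat p.2 := by
  set σ := decPerm hSc hTc hm hS0 p with hσ
  rw [mmp1011_eq]
  have hq0 : σ q = 0 := decPerm_eq hSc hTc hm hS0 p hq
  have hsplit : (Finset.univ.filter (fun i =>
      (∃ j, i < j ∧ σ i < σ j) ∧ (∃ j, j < i ∧ σ j < σ i) ∧ (∃ j, i < j ∧ σ j < σ i))) =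
      (Finset.univ.filter (fun i => ((∃ j, i < j ∧ σ i < σ j) ∧ (∃ j, j < i ∧ σ j < σ i) ∧
        (∃ j, i < j ∧ σ j < σ i)) ∧ i.val < k)) ∪
      (Finset.univ.filter (fun i => ((∃ j, i < j ∧ σ i < σ j) ∧ (∃ j, j < i ∧ σ j < σ i) ∧
        (∃ j, i < j ∧ σ j < σ i)) ∧ k < i.val)) := by
    ext i
    simp only [Finset.mem_filter, Finset.mem_union, Finset.mem_univ, true_and]
    constructor
    · intro h
      rcases lt_trichotomy i.val k with hik | hik | hik
      · exact Or.inl ⟨h, hik⟩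
      · exfalso
        have hiq : i = q := Fin.ext (by omega)
        obtain ⟨j, _, hlt⟩ := h.2.2
        rw [hiq, hq0] at hlt
        have := Fin.lt_def.mp hlt
        simp at this
      · exact Or.inr ⟨h, hik⟩
    · rintro (⟨h, -⟩ | ⟨h, -⟩) <;> exact h
  rw [hsplit, Finset.card_union_of_disjoint (by
    rw [Finset.disjoint_left]
    intro a ha hb
    have h1 := (Finset.mem_filter.mp ha).2.2
    have h2 := (Finset.mem_filter.mp hb).2.2
    omega)]
  have htk : k < (σ.symm (Fin.last (m+1))).val :=
    decPerm_lastpos hSc hTc hm hS0 hSL p (σ.symm (Fin.last (m+1))) (Equiv.apply_symm_apply _ _)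
  congr 1
  -- the A part
  · unfold f2stat
    apply Finset.card_bij (fun a ha => (⟨a.val, (Finset.mem_filter.mp ha).2.2⟩ : Fin k))
    · intro a ha
      obtain ⟨-, hP, hak⟩ := Finset.mem_filter.mp ha
      refine Finset.mem_filter.mpr ⟨Finset.mem_univ _, ?_⟩
      obtain ⟨j, hj, hlt⟩ := hP.2.1
      have hjv := Fin.lt_def.mp hj
      have hjk : j.val < k := by omega
      exact ⟨⟨j.val, hjk⟩, Fin.lt_def.mpr (show j.val < a.val from hjv),
        (decPerm_lt_iffS' hSc hTc hm hS0 p j a ⟨j.val, hjk⟩ ⟨a.val, hak⟩ rfl rfl).mp hlt⟩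
    · intro a ha a' ha' h
      have h3 := congrArg Fin.val h
      exact Fin.ext h3
    · intro b hb
      obtain ⟨-, hbcond⟩ := Finset.mem_filter.mp hb
      have hbk : (b : ℕ) < k := b.isLt
      refine ⟨⟨b.val, by omega⟩, Finset.mem_filter.mpr ⟨Finset.mem_univ _, ⟨?_, hbk⟩⟩,
        Fin.ext rfl⟩
      refine ⟨⟨σ.symm (Fin.last (m+1)), ?_, ?_⟩, ?_, ?_⟩
      · exact Fin.lt_def.mpr (show b.val < (σ.symm (Fin.last (m+1))).val by omega)
      · rw [Equiv.apply_symm_apply]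
        refine Fin.lt_last_iff_ne_last.mpr ?_
        intro hh
        exact hSL (hh ▸ decPerm_memS hSc hTc hm hS0 p (show (⟨b.val, _⟩ : Fin (m+2)).val < k from hbk))
      · obtain ⟨j', hj', hltπ⟩ := hbcond
        have hjv := Fin.lt_def.mp hj'
        refine ⟨⟨j'.val, by omega⟩, Fin.lt_def.mpr (show j'.val < b.val from hjv), ?_⟩
        exact (decPerm_lt_iffS' hSc hTc hm hS0 p _ _ j' b rfl rfl).mpr hltπ
      · refine ⟨q, Fin.lt_def.mpr (show b.val < q.val by omega), ?_⟩
        rw [hq0, Fin.pos_iff_ne_zero]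
        intro hh
        exact hS0 (hh ▸ decPerm_memS hSc hTc hm hS0 p (show (⟨b.val, _⟩ : Fin (m+2)).val < k from hbk))
  -- the D part
  · unfold gstat
    apply Finset.card_bij (fun a ha => (⟨a.val - (k+1), by have := a.isLt; omega⟩ : Fin (r+1)))
    · intro a ha
      obtain ⟨-, hP, hak⟩ := Finset.mem_filter.mp ha
      have hav := a.isLt
      refine Finset.mem_filter.mpr ⟨Finset.mem_univ _, ?_, ?_⟩
      · obtain ⟨j, hj, hlt⟩ := hP.1
        have hjv := Fin.lt_def.mp hj
        have hjl := j.isLt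
        refine ⟨⟨j.val - (k+1), by omega⟩, Fin.lt_def.mpr (show a.val - (k+1) < j.val - (k+1) by omega), ?_⟩
        exact (decPerm_lt_iffT' hSc hTc hm hS0 p a j ⟨a.val - (k+1), by omega⟩
          ⟨j.val - (k+1), by omega⟩ (show a.val = a.val - (k+1) + (k+1) by omega)
          (show j.val = j.val - (k+1) + (k+1) by omega)).mp hlt
      · obtain ⟨j, hj, hlt⟩ := hP.2.2
        have hjv := Fin.lt_def.mp hj
        have hjl := j.isLt
        refine ⟨⟨j.val - (k+1), by omega⟩, Fin.lt_def.mpr (show a.val - (k+1) < j.val - (k+1) by omega), ?_⟩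
        exact (decPerm_lt_iffT' hSc hTc hm hS0 p j a ⟨j.val - (k+1), by omega⟩
          ⟨a.val - (k+1), by omega⟩ (show j.val = j.val - (k+1) + (k+1) by omega)
          (show a.val = a.val - (k+1) + (k+1) by omega)).mp hlt
    · intro a ha a' ha' h
      have h1 := (Finset.mem_filter.mp ha).2.2
      have h2 := (Finset.mem_filter.mp ha').2.2
      have h3 := congrArg Fin.val h
      simp only at h3
      exact Fin.ext (by omega)
    · intro b hb
      obtain ⟨-, hb1, hb2⟩ := Finset.mem_filter.mp hb
      have hbr : (b : ℕ) < r + 1 := b.isLt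
      refine ⟨⟨b.val + (k+1), by omega⟩, Finset.mem_filter.mpr ⟨Finset.mem_univ _,
        ⟨?_, show k < b.val + (k+1) by omega⟩⟩,
        Fin.ext (show b.val + (k+1) - (k+1) = b.val by omega)⟩
      have hmem : σ ⟨b.val + (k+1), by omega⟩ ∈ Tset S :=
        decPerm_memT hSc hTc hm hS0 p (show ¬ b.val + (k+1) < k by omega)
          (show ¬ b.val + (k+1) = k by omega)
      refine ⟨?_, ?_, ?_⟩
      · obtain ⟨j', hj', hltρ⟩ := hb1
        have hjv := Fin.lt_def.mp hj'
        have hjl := j'.isLt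
        refine ⟨⟨j'.val + (k+1), by omega⟩,
          Fin.lt_def.mpr (show b.val + (k+1) < j'.val + (k+1) by omega), ?_⟩
        exact (decPerm_lt_iffT' hSc hTc hm hS0 p _ _ b j' rfl rfl).mpr hltρ
      · refine ⟨q, Fin.lt_def.mpr (show q.val < b.val + (k+1) by omega), ?_⟩
        rw [hq0, Fin.pos_iff_ne_zero]
        exact (mem_Tset.mp hmem).1
      · obtain ⟨j', hj', hltρ⟩ := hb2
        have hjv := Fin.lt_def.mp hj'
        have hjl := j'.isLt
        refine ⟨⟨j'.val + (k+1), by omega⟩,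
          Fin.lt_def.mpr (show b.val + (k+1) < j'.val + (k+1) by omega), ?_⟩
        exact (decPerm_lt_iffT' hSc hTc hm hS0 p _ _ j' b rfl rfl).mpr hltρ

end SplitCore2

lemma fiber_sum (m k r : ℕ) (hm : m = k + r) (q : Fin (m+2)) (hq : q.val = k)
    (S : Finset (Fin (m+2))) (hSsub : S ⊆ middles m) (hSc : S.card = k) :
    (∑ σ ∈ Finset.univ.filter (fun σ : Equiv.Perm (Fin (m+2)) =>
        (σ.symm 0 < σ.symm (Fin.last (m+1)) ∧ σ.symm 0 = q) ∧
        (Finset.univ.filter (fun i => i < q)).image σ = S),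
      (Polynomial.X : Polynomial ℤ) ^ mmp1011 σ) = Ppoly k * Qpoly r := by
  classical
  have hS0 : (0 : Fin (m+2)) ∉ S := fun h => ((mem_middles.mp (hSsub h)).1 rfl)
  have hSL : Fin.last (m+1) ∉ S := fun h => ((mem_middles.mp (hSsub h)).2 rfl)
  have hTc : (Tset S).card = r + 1 := by
    rw [card_Tset hS0 hSc (show k ≤ m by omega)]
    omega
  rw [← F2sum k, ← Gsum r, Finset.sum_mul_sum]
  rw [show (∑ i : Equiv.Perm (Fin k), ∑ j : Equiv.Perm (Fin (r+1)),
      (Polynomial.X : Polynomial ℤ) ^ f2stat i * Polynomial.X ^ gstat j) =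
      ∑ p : Equiv.Perm (Fin k) × Equiv.Perm (Fin (r+1)),
      (Polynomial.X : Polynomial ℤ) ^ f2stat p.1 * Polynomial.X ^ gstat p.2 from
    (Fintype.sum_prod_type (f := fun p : Equiv.Perm (Fin k) × Equiv.Perm (Fin (r+1)) =>
      (Polynomial.X : Polynomial ℤ) ^ f2stat p.1 * Polynomial.X ^ gstat p.2)).symm]
  symm
  apply Finset.sum_nbij (i := decPerm hSc hTc hm hS0)
  · intro p _
    refine Finset.mem_filter.mpr ⟨Finset.mem_univ _, ⟨?_, ?_⟩, ?_⟩
    · rw [decPerm_symm_zero hSc hTc hm hS0 hq p]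
      exact decPerm_symm_last hSc hTc hm hS0 hSL hq p
    · exact decPerm_symm_zero hSc hTc hm hS0 hq p
    · exact decPerm_image hSc hTc hm hS0 hq p
  · intro p hp p' hp' h
    have h1 : p.1 = p'.1 := by
      ext x
      have hxk : (x : ℕ) < k := x.isLt
      have e : decPerm hSc hTc hm hS0 p ⟨x.val, by omega⟩ =
          decPerm hSc hTc hm hS0 p' ⟨x.val, by omega⟩ := by rw [h]
      rw [decPerm_lt hSc hTc hm hS0 p (show (x:ℕ) < k from hxk),
        decPerm_lt hSc hTc hm hS0 p' (show (x:ℕ) < k from hxk)] at e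
      have e2 := (S.orderIsoOfFin hSc).injective (Subtype.coe_injective e)
      have e3 := congrArg Fin.val e2
      exact e3
    have h2 : p.2 = p'.2 := by
      ext x
      have hxr : (x : ℕ) < r + 1 := x.isLt
      have e : decPerm hSc hTc hm hS0 p ⟨x.val + (k+1), by omega⟩ =
          decPerm hSc hTc hm hS0 p' ⟨x.val + (k+1), by omega⟩ := by rw [h]
      rw [decPerm_gt hSc hTc hm hS0 p (show ¬ x.val + (k+1) < k by omega)
        (show ¬ x.val + (k+1) = k by omega),
        decPerm_gt hSc hTc hm hS0 p' (show ¬ x.val + (k+1) < k by omega)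
        (show ¬ x.val + (k+1) = k by omega)] at e
      have e2 := ((Tset S).orderIsoOfFin hTc).injective (Subtype.coe_injective e)
      have e3 := congrArg Fin.val e2
      simp only at e3
      have e4 : (⟨x.val + (k+1) - (k+1), by omega⟩ : Fin (r+1)) = x :=
        Fin.ext (show x.val + (k+1) - (k+1) = x.val by omega)
      rw [e4] at e2
      exact congrArg Fin.val e2
    exact Prod.ext h1 h2
  · intro σ hσ
    have hσ' := Finset.mem_coe.mp hσ
    obtain ⟨-, ⟨hlt, hsymm0⟩, himg⟩ := Finset.mem_filter.mp hσ'
    have hq_pos : σ q = 0 := by rw [← hsymm0, Equiv.apply_symm_apply]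
    have hmemS' : ∀ (i : Fin (m+2)), i.val < k → σ i ∈ S := by
      intro i hik
      rw [← himg]
      exact Finset.mem_image_of_mem σ
        (Finset.mem_filter.mpr ⟨Finset.mem_univ _, Fin.lt_def.mpr (by omega)⟩)
    have hmemT' : ∀ i : Fin (m+2), k < i.val → σ i ∈ Tset S := by
      intro i hik
      rw [mem_Tset]
      constructor
      · intro h0
        have hiq : i = σ.symm 0 := by rw [← h0, Equiv.symm_apply_apply]
        rw [hsymm0] at hiq
        have := congrArg Fin.val hiq
        omega
      · intro hS'
        rw [← himg] at hS'
        obtain ⟨j, hjmem, hje⟩ := Finset.mem_image.mp hS'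
        have hji := σ.injective hje
        have hjq := Fin.lt_def.mp (Finset.mem_filter.mp hjmem).2
        have := congrArg Fin.val hji
        omega
    let pfun : Fin k → Fin k := fun x =>
      (S.orderIsoOfFin hSc).symm ⟨σ ⟨x.val, by omega⟩, hmemS' ⟨x.val, by omega⟩ x.isLt⟩
    have hpinj : Function.Injective pfun := by
      intro x y hxy
      have e1 := congrArg (S.orderIsoOfFin hSc) hxy
      rw [OrderIso.apply_symm_apply, OrderIso.apply_symm_apply] at e1
      have e2 := σ.injective (congrArg Subtype.val e1)
      have e3 := congrArg Fin.val e2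
      exact Fin.ext e3
    let rfun : Fin (r+1) → Fin (r+1) := fun x =>
      ((Tset S).orderIsoOfFin hTc).symm
        ⟨σ ⟨x.val + (k+1), by omega⟩, hmemT' ⟨x.val + (k+1), by omega⟩ (show k < x.val + (k+1) by omega)⟩
    have hrinj : Function.Injective rfun := by
      intro x y hxy
      have e1 := congrArg ((Tset S).orderIsoOfFin hTc) hxy
      rw [OrderIso.apply_symm_apply, OrderIso.apply_symm_apply] at e1
      have e2 := σ.injective (congrArg Subtype.val e1)
      have e3 := congrArg Fin.val e2
      simp only at e3
      exact Fin.ext (by omega)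
    refine ⟨(Equiv.ofBijective pfun (Finite.injective_iff_bijective.mp hpinj),
      Equiv.ofBijective rfun (Finite.injective_iff_bijective.mp hrinj)),
      Finset.mem_coe.mpr (Finset.mem_univ _), ?_⟩
    apply Equiv.ext
    intro i
    rcases lt_trichotomy i.val k with hik | hik | hik
    · rw [decPerm_lt hSc hTc hm hS0 _ hik]
      show ((S.orderIsoOfFin hSc) (pfun ⟨i.val, hik⟩) : Fin (m+2)) = σ i
      show ((S.orderIsoOfFin hSc) ((S.orderIsoOfFin hSc).symm _) : Fin (m+2)) = σ i
      rw [OrderIso.apply_symm_apply]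
    · rw [decPerm_eq hSc hTc hm hS0 _ hik]
      rw [show i = q from Fin.ext (by omega)]
      exact hq_pos.symm
    · rw [decPerm_gt hSc hTc hm hS0 _ (by omega) (by omega)]
      show ((Tset S).orderIsoOfFin hTc (rfun ⟨i.val - (k+1), by have := i.isLt; omega⟩) : Fin (m+2)) = σ i
      show (((Tset S).orderIsoOfFin hTc) (((Tset S).orderIsoOfFin hTc).symm _) : Fin (m+2)) = σ i
      rw [OrderIso.apply_symm_apply]
      show σ ⟨i.val - (k+1) + (k+1), by omega⟩ = σ i
      congr 1
      exact Fin.ext (show i.val - (k+1) + (k+1) = i.val by omega)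
  · intro p _
    rw [mmp_decPerm hSc hTc hm hS0 hSL hq p, pow_add]

lemma split_sum (m : ℕ) :
    (∑ σ ∈ Finset.univ.filter (fun σ : Equiv.Perm (Fin (m+2)) =>
        σ.symm 0 < σ.symm (Fin.last (m+1))),
      (Polynomial.X : Polynomial ℤ) ^ mmp1011 σ) =
    ∑ k ∈ Finset.range (m+1), (m.choose k) • (Ppoly k * Qpoly (m-k)) := by
  classical
  rw [← Finset.sum_fiberwise_of_maps_to (g := fun σ : Equiv.Perm (Fin (m+2)) => σ.symm 0)
    (t := (Finset.univ : Finset (Fin (m+2)))) (fun σ _ => Finset.mem_univ _)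
    (fun σ => (Polynomial.X : Polynomial ℤ) ^ mmp1011 σ)]
  have hfib : ∀ q : Fin (m+2),
      (∑ σ ∈ (Finset.univ.filter (fun σ : Equiv.Perm (Fin (m+2)) =>
          σ.symm 0 < σ.symm (Fin.last (m+1)))).filter (fun σ => σ.symm 0 = q),
        (Polynomial.X : Polynomial ℤ) ^ mmp1011 σ) =
      (fun t : ℕ => if t ≤ m then (m.choose t) • (Ppoly t * Qpoly (m-t)) else 0) q.val := by
    intro q
    by_cases hqm : q.val ≤ m
    · simp only [if_pos hqm]
      rw [Finset.filter_filter]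
      rw [← Finset.sum_fiberwise_of_maps_to
        (g := fun σ : Equiv.Perm (Fin (m+2)) => (Finset.univ.filter (fun i => i < q)).image σ)
        (t := Finset.powersetCard q.val (middles m)) ?hmaps
        (fun σ => (Polynomial.X : Polynomial ℤ) ^ mmp1011 σ)]
      case hmaps =>
        intro σ hσ
        obtain ⟨-, hlt, hq0⟩ := Finset.mem_filter.mp hσ
        refine Finset.mem_powersetCard.mpr ⟨?_, ?_⟩
        · intro x hx
          obtain ⟨i, hi, rfl⟩ := Finset.mem_image.mp hx
          have hiq := Fin.lt_def.mp (Finset.mem_filter.mp hi).2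
          refine mem_middles.mpr ⟨?_, ?_⟩
          · intro h0
            have : i = σ.symm 0 := by rw [← h0, Equiv.symm_apply_apply]
            rw [hq0] at this
            have := congrArg Fin.val this
            omega
          · intro hL
            have : i = σ.symm (Fin.last (m+1)) := by rw [← hL, Equiv.symm_apply_apply]
            have h2 := Fin.lt_def.mp hlt
            have h3 := congrArg Fin.val hq0
            have h4 := congrArg Fin.val this
            omega
        · rw [Finset.card_image_of_injective _ σ.injective]
          have : Finset.univ.filter (fun i => i < q) = Finset.Iio q := by
            ext i
            simp [Finset.mem_Iio]
          rw [this, Fin.card_Iio]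
      trans (∑ _S ∈ Finset.powersetCard q.val (middles m), (Ppoly q.val * Qpoly (m - q.val)))
      · apply Finset.sum_congr rfl
        intro S hS
        obtain ⟨hSsub, hScard⟩ := Finset.mem_powersetCard.mp hS
        first
          | exact fiber_sum m q.val (m - q.val) (by omega) q rfl S hSsub hScard
          | (rw [Finset.filter_filter]
             exact fiber_sum m q.val (m - q.val) (by omega) q rfl S hSsub hScard)
      · rw [Finset.sum_const, Finset.card_powersetCard, card_middles]
    · simp only [if_neg hqm]
      have hempty : (Finset.univ.filter (fun σ : Equiv.Perm (Fin (m+2)) =>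
          σ.symm 0 < σ.symm (Fin.last (m+1)))).filter (fun σ => σ.symm 0 = q) = ∅ := by
        refine Finset.eq_empty_iff_forall_notMem.mpr ?_
        intro σ hσ
        obtain ⟨hmem1, hq0⟩ := Finset.mem_filter.mp hσ
        have hlt := (Finset.mem_filter.mp hmem1).2
        have h1 := Fin.lt_def.mp hlt
        have h2 := congrArg Fin.val hq0
        have h3 := Fin.le_def.mp (Fin.le_last (σ.symm (Fin.last (m+1))))
        have h4 := q.isLt
        omega
      rw [hempty, Finset.sum_empty]
  rw [Finset.sum_congr rfl (fun q _ => hfib q)]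
  rw [Fin.sum_univ_eq_sum_range
    (fun t : ℕ => if t ≤ m then (m.choose t) • (Ppoly t * Qpoly (m-t)) else 0) (m+2)]
  rw [Finset.sum_range_succ, if_neg (by omega), add_zero]
  apply Finset.sum_congr rfl
  intro t ht
  rw [if_pos (by have := Finset.mem_range.mp ht; omega)]

theorem stmt_19 (n : ℕ) (hn : 2 ≤ n) :
    (∑ σ ∈ Finset.univ.filter (fun σ : Equiv.Perm (Fin n) =>
        σ.symm ⟨0, by omega⟩ < σ.symm ⟨n - 1, by omega⟩),
      (Polynomial.X : Polynomial ℤ) ^ mmp1011 σ) =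
      (∏ i ∈ Finset.range (n - 2),
        ((3 : Polynomial ℤ) + (i : Polynomial ℤ) * Polynomial.X)) ∧
    (Finset.univ.filter (fun σ : Equiv.Perm (Fin n) =>
        σ.symm ⟨0, by omega⟩ < σ.symm ⟨n - 1, by omega⟩ ∧ mmp1011 σ = 0)).card =
      3 ^ (n - 2) := by
  obtain ⟨m, rfl⟩ : ∃ m, n = m + 2 := ⟨n - 2, by omega⟩
  have key : (∑ σ ∈ Finset.univ.filter (fun σ : Equiv.Perm (Fin (m+2)) =>
      σ.symm 0 < σ.symm (Fin.last (m+1))),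
      (Polynomial.X : Polynomial ℤ) ^ mmp1011 σ) =
      ∏ i ∈ Finset.range m, ((3 : Polynomial ℤ) + (i : Polynomial ℤ) * Polynomial.X) :=
    (split_sum m).trans (convolution m)
  constructor
  · exact key
  · have hcast := congrArg (Polynomial.eval (0:ℤ)) key
    rw [Polynomial.eval_finset_sum, Polynomial.eval_prod] at hcast
    simp only [Polynomial.eval_pow, Polynomial.eval_X, Polynomial.eval_add,
      Polynomial.eval_mul, Polynomial.eval_ofNat, Polynomial.eval_natCast,
      mul_zero, add_zero, zero_pow_eq] at hcast
    rw [Finset.sum_boole, Finset.prod_const, Finset.card_range] at hcast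
    rw [Finset.filter_filter] at hcast
    show (Finset.univ.filter (fun σ : Equiv.Perm (Fin (m+2)) =>
        σ.symm 0 < σ.symm (Fin.last (m+1)) ∧ mmp1011 σ = 0)).card = 3 ^ m
    exact_mod_cast hcast
end
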